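/- arXiv:2008.01409 — 9 statements merged into one kernel-verified Lean document; each statement's English description precedes it below -/
import Mathlib

section
/- Let (A, ⟪−,−⟫, μ) be a Hamiltonian algebra over B. Then the set of Casimir elements of A equals B: Cas(A) = ⊕_{s∈I} k·e_s. (The inclusion B ⊆ Cas(A) follows from B-linearity; conversely, any c with ⟪c,b⟫ = 0 for all b satisfies c e_s = λ_s e_s = e_s c for some λ_s ∈ k, for every s ∈ I.) -/
open TensorProduct

noncomputable section

/-- The flip `u ⊗ v ↦ v ⊗ u` on `A ⊗[k] A`. -/
def flipT (k A : Type*) [CommRing k] [Ring A] [Algebra k A] :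
    A ⊗[k] A →ₗ[k] A ⊗[k] A :=
  (TensorProduct.comm k A A).toLinearMap

/-- Outer left multiplication `b · (u ⊗ v) = (b * u) ⊗ v` on `A ⊗[k] A`. -/
def outL (k : Type*) {A : Type*} [CommRing k] [Ring A] [Algebra k A] (b : A) :
    A ⊗[k] A →ₗ[k] A ⊗[k] A :=
  TensorProduct.map (LinearMap.mulLeft k b) LinearMap.id

/-- Outer right multiplication `(u ⊗ v) · c = u ⊗ (v * c)` on `A ⊗[k] A`. -/
def outR (k : Type*) {A : Type*} [CommRing k] [Ring A] [Algebra k A] (c : A) :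
    A ⊗[k] A →ₗ[k] A ⊗[k] A :=
  TensorProduct.map LinearMap.id (LinearMap.mulRight k c)

/-- The cyclic permutation `τ : a₁ ⊗ a₂ ⊗ a₃ ↦ a₃ ⊗ a₁ ⊗ a₂`. -/
def tau3 (k A : Type*) [CommRing k] [Ring A] [Algebra k A] :
    A ⊗[k] (A ⊗[k] A) →ₗ[k] A ⊗[k] (A ⊗[k] A) :=
  (TensorProduct.comm k (A ⊗[k] A) A).toLinearMap ∘ₗ
    (TensorProduct.assoc k A A A).symm.toLinearMap

/-- `D` is a double bracket on `A`: a bilinear map `A × A → A ⊗ A` satisfying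
cyclic antisymmetry and the (outer-bimodule) derivation rule in its second slot. -/
structure IsDoubleBracket {k A : Type*} [CommRing k] [Ring A] [Algebra k A]
    (D : A →ₗ[k] A →ₗ[k] A ⊗[k] A) : Prop where
  cyclic_antisymm : ∀ a b : A, D a b = - flipT k A (D b a)
  derivation : ∀ a b c : A, D a (b * c) = outR k c (D a b) + outL k b (D a c)

/-- The map `d ↦ ⟪a, d′⟫ ⊗ d″` on `A ⊗ A`, valued in `A ⊗ (A ⊗ A)`. -/
def dblExt {k A : Type*} [CommRing k] [Ring A] [Algebra k A]
    (D : A →ₗ[k] A →ₗ[k] A ⊗[k] A) (a : A) :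
    A ⊗[k] A →ₗ[k] A ⊗[k] (A ⊗[k] A) :=
  (TensorProduct.assoc k A A A).toLinearMap ∘ₗ TensorProduct.map (D a) LinearMap.id

/-- The triple bracket associated with a double bracket:
`⟪a,b,c⟫ = ⟪a,⟪b,c⟫′⟫ ⊗ ⟪b,c⟫″ + τ(⟪b,⟪c,a⟫′⟫ ⊗ ⟪c,a⟫″) + τ²(⟪c,⟪a,b⟫′⟫ ⊗ ⟪a,b⟫″)`. -/
def tripleBracket {k A : Type*} [CommRing k] [Ring A] [Algebra k A]
    (D : A →ₗ[k] A →ₗ[k] A ⊗[k] A) (a b c : A) :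
    A ⊗[k] (A ⊗[k] A) :=
  dblExt D a (D b c) + tau3 k A (dblExt D b (D c a))
    + tau3 k A (tau3 k A (dblExt D c (D a b)))

/-- `μ` is a moment map for the double bracket `D` relative to the orthogonal
idempotents `e`: writing `μ_s = e_s μ e_s`, the off-diagonal components of `μ`
vanish and each `μ_s` satisfies the additive property
`⟪μ_s, a⟫ = a e_s ⊗ e_s − e_s ⊗ e_s a`. -/
def IsMomentMap {k A : Type*} [CommRing k] [Ring A] [Algebra k A]
    {I : Type*} (e : I → A) (D : A →ₗ[k] A →ₗ[k] A ⊗[k] A) (μ : A) : Prop :=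
  (∀ s t : I, s ≠ t → e s * μ * e t = 0) ∧
  ∀ (s : I) (a : A),
    D (e s * μ * e s) a = (a * e s) ⊗ₜ[k] (e s) - (e s) ⊗ₜ[k] (e s * a)

/-- For a Hamiltonian algebra (A, ⟪−,−⟫, μ) over B, the Casimir
elements of A are exactly the elements of B = ⊕_{s∈I} k·e_s. -/
theorem casimirs_eq_base
    {k : Type*} [Field k] [CharZero k]
    {A : Type*} [Ring A] [Algebra k A]
    {I : Type*} [Fintype I]
    (e : I → A)
    (he_idem : ∀ s, e s * e s = e s)
    (he_orth : ∀ s t, s ≠ t → e s * e t = 0)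
    (he_sum : ∑ s, e s = 1)
    (he_ne : ∀ s, e s ≠ 0)
    (D : A →ₗ[k] A →ₗ[k] A ⊗[k] A)
    (hD : IsDoubleBracket D)
    (hDB : ∀ (s : I) (a : A), D (e s) a = 0 ∧ D a (e s) = 0)
    (hP : ∀ a b c : A, tripleBracket D a b c = 0)
    (μ : A) (hμ : IsMomentMap e D μ) :
    ∀ c : A, (∀ b : A, D c b = 0) ↔ c ∈ Submodule.span k (Set.range e) := by
  intro c
  constructor
  · intro hc
    have key : ∀ s : I, ∃ lam : k, c * e s = lam • e s := by
      intro s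
      have h1 : D (e s * μ * e s) c = 0 := by
        rw [hD.cyclic_antisymm, hc, map_zero, neg_zero]
      have h2 : (c * e s) ⊗ₜ[k] (e s) = (e s) ⊗ₜ[k] (e s * c) := by
        have h3 := hμ.2 s c
        rw [h1] at h3
        have := sub_eq_zero.mp h3.symm
        exact this
      -- pick dual functional f with f (e s) ≠ 0
      obtain ⟨f, hf⟩ : ∃ f : Module.Dual k A, f (e s) ≠ 0 := by
        by_contra h
        push_neg at h
        exact he_ne s ((Module.forall_dual_apply_eq_zero_iff k (e s)).mp h)
      -- contraction g : A ⊗ A → A, x ⊗ y ↦ f y • x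
      set g : A ⊗[k] A →ₗ[k] A := TensorProduct.lift
        (LinearMap.mk₂ k (fun x y => f y • x)
          (fun x x' y => show f y • (x + x') = f y • x + f y • x' by rw [smul_add])
          (fun r x y => show f y • (r • x) = r • (f y • x) from smul_comm _ _ _)
          (fun x y y' => show f (y + y') • x = f y • x + f y' • x by
            rw [map_add, add_smul])
          (fun r x y => show f (r • y) • x = r • (f y • x) by
            rw [map_smul, smul_assoc])) with hg
      have h4 : g ((c * e s) ⊗ₜ[k] (e s)) = g ((e s) ⊗ₜ[k] (e s * c)) := by rw [h2]
      simp only [hg, TensorProduct.lift.tmul, LinearMap.mk₂_apply] at h4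
      refine ⟨(f (e s))⁻¹ * f (e s * c), ?_⟩
      rw [mul_smul]
      rw [← h4, ← mul_smul, inv_mul_cancel₀ hf, one_smul]
    have : c = ∑ s, c * e s := by rw [← Finset.mul_sum, he_sum, mul_one]
    rw [this]
    refine Submodule.sum_mem _ (fun s _ => ?_)
    obtain ⟨lam, hlam⟩ := key s
    rw [hlam]
    exact Submodule.smul_mem _ _ (Submodule.subset_span ⟨s, rfl⟩)
  · intro hc b
    induction hc using Submodule.span_induction with
    | mem x hx => obtain ⟨s, rfl⟩ := hx; exact (hDB s b).1
    | zero => simp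
    | add x y _ _ hx hy => simp [hx, hy]
    | smul r x _ hx => simp [hx]
end
end

section
/- Let φ : A1 → A2 be an isomorphism of double Poisson algebras (a bijective morphism of double brackets between double Poisson algebras over B). If A1, A2 are Hamiltonian algebras with moment maps μ₁, μ₂, then μ₂ − φ(μ₁) ∈ B. In particular (taking φ = id), a moment map is unique up to the addition of an element of B. -/
open TensorProduct

noncomputable section

/-- If φ : A1 → A2 is an isomorphism of double Poisson algebras and
A1, A2 are Hamiltonian algebras with moment maps μ₁, μ₂, then μ₂ − φ(μ₁) ∈ B; in
particular a moment map is unique up to the addition of an element of B. -/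
theorem iso_momentMap_diff_mem_base
    {k : Type*} [Field k] [CharZero k]
    {A1 : Type*} [Ring A1] [Algebra k A1]
    {A2 : Type*} [Ring A2] [Algebra k A2]
    {I : Type*} [Fintype I]
    (e1 : I → A1) (e2 : I → A2)
    (he1_idem : ∀ s, e1 s * e1 s = e1 s)
    (he1_orth : ∀ s t, s ≠ t → e1 s * e1 t = 0)
    (he1_sum : ∑ s, e1 s = 1)
    (he1_ne : ∀ s, e1 s ≠ 0)
    (he2_idem : ∀ s, e2 s * e2 s = e2 s)
    (he2_orth : ∀ s t, s ≠ t → e2 s * e2 t = 0)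
    (he2_sum : ∑ s, e2 s = 1)
    (he2_ne : ∀ s, e2 s ≠ 0)
    (D1 : A1 →ₗ[k] A1 →ₗ[k] A1 ⊗[k] A1)
    (D2 : A2 →ₗ[k] A2 →ₗ[k] A2 ⊗[k] A2)
    (hD1 : IsDoubleBracket D1) (hD2 : IsDoubleBracket D2)
    (hD1B : ∀ (s : I) (a : A1), D1 (e1 s) a = 0 ∧ D1 a (e1 s) = 0)
    (hD2B : ∀ (s : I) (a : A2), D2 (e2 s) a = 0 ∧ D2 a (e2 s) = 0)
    (φ : A1 →ₐ[k] A2)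
    (hφe : ∀ s, φ (e1 s) = e2 s)
    (hφD : ∀ a b : A1,
      TensorProduct.map φ.toLinearMap φ.toLinearMap (D1 a b) = D2 (φ a) (φ b))
    (hφbij : Function.Bijective φ)
    (hP1 : ∀ a b c : A1, tripleBracket D1 a b c = 0)
    (hP2 : ∀ a b c : A2, tripleBracket D2 a b c = 0)
    (μ₁ : A1) (hμ₁ : IsMomentMap e1 D1 μ₁)
    (μ₂ : A2) (hμ₂ : IsMomentMap e2 D2 μ₂) :
    μ₂ - φ μ₁ ∈ Submodule.span k (Set.range e2) := by
  classical
  set ν : A2 := μ₂ - φ μ₁ with hν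
  -- moment property of φ μ₁ on the diagonal
  have hφμ_diag : ∀ (s : I) (a : A2),
      D2 (e2 s * φ μ₁ * e2 s) a = (a * e2 s) ⊗ₜ[k] (e2 s) - (e2 s) ⊗ₜ[k] (e2 s * a) := by
    intro s a
    obtain ⟨b, rfl⟩ := hφbij.2 a
    have h1 : e2 s * φ μ₁ * e2 s = φ (e1 s * μ₁ * e1 s) := by
      rw [map_mul, map_mul, hφe]
    rw [h1, ← hφD, hμ₁.2 s b, map_sub, TensorProduct.map_tmul, TensorProduct.map_tmul]
    simp [map_mul, hφe]
  -- key: D2 (e2 s * ν * e2 s) vanishes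
  have hkey : ∀ (s : I) (a : A2), D2 (e2 s * ν * e2 s) a = 0 := by
    intro s a
    have hsplit : e2 s * ν * e2 s = e2 s * μ₂ * e2 s - e2 s * φ μ₁ * e2 s := by
      rw [hν, mul_sub, sub_mul]
    rw [hsplit, map_sub, LinearMap.sub_apply, hμ₂.2 s a, hφμ_diag s a, sub_self]
  -- each diagonal component lies in the span
  have hdiag : ∀ s : I, e2 s * ν * e2 s ∈ Submodule.span k (Set.range e2) := by
    intro s
    set x := e2 s * ν * e2 s with hx
    have hxe : x * e2 s = x := by
      rw [hx, mul_assoc (e2 s * ν), he2_idem]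
    have hex : e2 s * x = x := by
      rw [hx, ← mul_assoc, ← mul_assoc, he2_idem]
    have h0 : D2 (e2 s * μ₂ * e2 s) x = 0 := by
      rw [hD2.cyclic_antisymm, hkey s, map_zero, neg_zero]
    have h1 := hμ₂.2 s x
    rw [h0, hxe, hex] at h1
    have heq : x ⊗ₜ[k] e2 s = e2 s ⊗ₜ[k] x := by
      have := h1.symm
      rw [sub_eq_zero] at this
      exact this
    -- a dual functional sending e2 s to 1
    obtain ⟨f, hf⟩ : ∃ f : Module.Dual k A2, f (e2 s) ≠ 0 := by
      by_contra hcon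
      push_neg at hcon
      exact he2_ne s ((Module.forall_dual_apply_eq_zero_iff k (e2 s)).mp hcon)
    set f' : Module.Dual k A2 := (f (e2 s))⁻¹ • f with hf'
    have hf'e : f' (e2 s) = 1 := by
      simp [hf', inv_mul_cancel₀ hf]
    set g : A2 ⊗[k] A2 →ₗ[k] A2 :=
      (TensorProduct.lid k A2).toLinearMap ∘ₗ TensorProduct.map f' LinearMap.id with hg
    have hgx : g (x ⊗ₜ[k] e2 s) = f' x • e2 s := by
      simp [hg]
    have hge : g (e2 s ⊗ₜ[k] x) = x := by
      simp [hg, hf'e]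
    have : f' x • e2 s = x := by
      rw [← hgx, heq, hge]
    rw [← this]
    exact Submodule.smul_mem _ _ (Submodule.subset_span ⟨s, rfl⟩)
  -- decompose ν as a sum of components
  have hsum : ν = ∑ s, ∑ t, e2 s * ν * e2 t := by
    conv_lhs => rw [← one_mul ν, ← mul_one (1 * ν), ← he2_sum]
    rw [Finset.sum_mul, Finset.sum_mul]
    simp [Finset.mul_sum]
  have : ν ∈ Submodule.span k (Set.range e2) := by
    rw [hsum]
    refine Submodule.sum_mem _ fun s _ => Submodule.sum_mem _ fun t _ => ?_
    by_cases hst : s = t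
    · subst hst; exact hdiag s
    · have hoff : e2 s * ν * e2 t = 0 := by
        have h2 : e2 s * φ μ₁ * e2 t = 0 := by
          rw [← hφe s, ← hφe t, ← map_mul, ← map_mul, hμ₁.1 s t hst, map_zero]
        rw [hν, mul_sub, sub_mul, hμ₂.1 s t hst, h2, sub_zero]
      rw [hoff]
      exact Submodule.zero_mem _
  exact this
end
end

section
/- Let ψ : A1 → A2 be a morphism of double brackets which is injective as an algebra homomorphism, where both brackets are double quasi-Poisson brackets, and suppose A2 is a quasi-Hamiltonian algebra with multiplicative moment map Φ′ such that Φ′ = ψ(Φ) and (Φ′)⁻¹ = ψ(Ξ) for some Φ, Ξ ∈ A1. Then Φ is invertible in A1 with inverse Ξ and is a multiplicative moment map for A1, so ψ is a morphism of quasi-Hamiltonian algebras, and this quasi-Hamiltonian structure on A1 is unique. -/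
open TensorProduct

noncomputable section

/-- The right-hand side of the double quasi-Poisson condition: a double bracket is
quasi-Poisson when its triple bracket equals this expression. -/
def quasiTerm {k A : Type*} [Field k] [Ring A] [Algebra k A]
    {I : Type*} [Fintype I] (e : I → A) (a b c : A) : A ⊗[k] (A ⊗[k] A) :=
  (1/4 : k) • ∑ s : I,
    ((c * e s * a) ⊗ₜ[k] ((e s * b) ⊗ₜ[k] (e s))
      - (c * e s * a) ⊗ₜ[k] ((e s) ⊗ₜ[k] (b * e s))
      - (c * e s) ⊗ₜ[k] ((a * e s * b) ⊗ₜ[k] (e s))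
      + (c * e s) ⊗ₜ[k] ((a * e s) ⊗ₜ[k] (b * e s))
      - (e s * a) ⊗ₜ[k] ((e s * b) ⊗ₜ[k] (e s * c))
      + (e s * a) ⊗ₜ[k] ((e s) ⊗ₜ[k] (b * e s * c))
      + (e s) ⊗ₜ[k] ((a * e s * b) ⊗ₜ[k] (e s * c))
      - (e s) ⊗ₜ[k] ((a * e s) ⊗ₜ[k] (b * e s * c)))

/-- `Φ` is a multiplicative moment map for the double bracket `D` relative to the
orthogonal idempotents `e`: `Φ` is invertible, its off-diagonal components vanish,
and each `Φ_s = e_s Φ e_s` satisfies the multiplicative property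
`⟪Φ_s, a⟫ = (1/2)(a e_s ⊗ Φ_s − e_s ⊗ Φ_s a + a Φ_s ⊗ e_s − Φ_s ⊗ e_s a)`. -/
def IsMultMomentMap {k A : Type*} [Field k] [Ring A] [Algebra k A]
    {I : Type*} (e : I → A) (D : A →ₗ[k] A →ₗ[k] A ⊗[k] A) (Φ : A) : Prop :=
  IsUnit Φ ∧
  (∀ s t : I, s ≠ t → e s * Φ * e t = 0) ∧
  ∀ (s : I) (a : A),
    D (e s * Φ * e s) a = (1/2 : k) •
      ((a * e s) ⊗ₜ[k] (e s * Φ * e s)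
        - (e s) ⊗ₜ[k] (e s * Φ * e s * a)
        + (a * (e s * Φ * e s)) ⊗ₜ[k] (e s)
        - (e s * Φ * e s) ⊗ₜ[k] (e s * a))

/-- If ψ : A1 → A2 is an injective morphism of double brackets between
double quasi-Poisson algebras, A2 is quasi-Hamiltonian with multiplicative moment map
Φ′ = ψ(Φ), and (Φ′)⁻¹ = ψ(Ξ) for some Φ, Ξ ∈ A1, then Φ is invertible in A1 with
inverse Ξ and is a multiplicative moment map for A1, so ψ is a morphism of
quasi-Hamiltonian algebras; and this quasi-Hamiltonian structure on A1 is unique. -/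
theorem injective_morphism_multMomentMap
    {k : Type*} [Field k] [CharZero k]
    {A1 : Type*} [Ring A1] [Algebra k A1]
    {A2 : Type*} [Ring A2] [Algebra k A2]
    {I : Type*} [Fintype I]
    (e1 : I → A1) (e2 : I → A2)
    (he1_idem : ∀ s, e1 s * e1 s = e1 s)
    (he1_orth : ∀ s t, s ≠ t → e1 s * e1 t = 0)
    (he1_sum : ∑ s, e1 s = 1)
    (he1_ne : ∀ s, e1 s ≠ 0)
    (he2_idem : ∀ s, e2 s * e2 s = e2 s)
    (he2_orth : ∀ s t, s ≠ t → e2 s * e2 t = 0)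
    (he2_sum : ∑ s, e2 s = 1)
    (he2_ne : ∀ s, e2 s ≠ 0)
    (D1 : A1 →ₗ[k] A1 →ₗ[k] A1 ⊗[k] A1)
    (D2 : A2 →ₗ[k] A2 →ₗ[k] A2 ⊗[k] A2)
    (hD1 : IsDoubleBracket D1) (hD2 : IsDoubleBracket D2)
    (hD1B : ∀ (s : I) (a : A1), D1 (e1 s) a = 0 ∧ D1 a (e1 s) = 0)
    (hD2B : ∀ (s : I) (a : A2), D2 (e2 s) a = 0 ∧ D2 a (e2 s) = 0)
    (φ : A1 →ₐ[k] A2)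
    (hφe : ∀ s, φ (e1 s) = e2 s)
    (hφD : ∀ a b : A1,
      TensorProduct.map φ.toLinearMap φ.toLinearMap (D1 a b) = D2 (φ a) (φ b))
    (hφinj : Function.Injective φ)
    (hQ1 : ∀ a b c : A1, tripleBracket D1 a b c = quasiTerm e1 a b c)
    (hQ2 : ∀ a b c : A2, tripleBracket D2 a b c = quasiTerm e2 a b c)
    (Φ' : A2) (hΦ' : IsMultMomentMap e2 D2 Φ')
    (Φ Ξ : A1) (hΦφ : φ Φ = Φ')
    (hΞl : φ Ξ * Φ' = 1) (hΞr : Φ' * φ Ξ = 1) :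
    Φ * Ξ = 1 ∧ Ξ * Φ = 1 ∧ IsMultMomentMap e1 D1 Φ ∧
      ∀ Ψ : A1, φ Ψ = Φ' → Ψ = Φ := by
  have hmul : Φ * Ξ = 1 := by
    apply hφinj; rw [map_mul, map_one, hΦφ, hΞr]
  have hmul' : Ξ * Φ = 1 := by
    apply hφinj; rw [map_mul, map_one, hΦφ, hΞl]
  have hinj2 : Function.Injective
      (TensorProduct.map φ.toLinearMap φ.toLinearMap) := by
    rw [← LinearMap.lTensor_comp_rTensor]
    exact (Module.Flat.lTensor_preserves_injective_linearMap _ hφinj).comp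
      (Module.Flat.rTensor_preserves_injective_linearMap _ hφinj)
  obtain ⟨-, hΦ'od, hΦ'mm⟩ := hΦ'
  refine ⟨hmul, hmul', ⟨⟨⟨Φ, Ξ, hmul, hmul'⟩, rfl⟩, ?_, ?_⟩, ?_⟩
  · intro s t hst
    apply hφinj
    simp only [map_mul, map_zero, hφe, hΦφ]
    exact hΦ'od s t hst
  · intro s a
    apply hinj2
    rw [hφD]
    have h1 : φ (e1 s * Φ * e1 s) = e2 s * Φ' * e2 s := by
      simp [map_mul, hφe, hΦφ]
    rw [h1, hΦ'mm s (φ a)]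
    simp [map_mul, hφe, hΦφ, TensorProduct.tmul_sub, TensorProduct.sub_tmul,
      TensorProduct.tmul_add, TensorProduct.add_tmul, h1]
  · intro Ψ hΨ
    apply hφinj
    rw [hΨ, hΦφ]
end
end

section
/- Let ψ : A1 → A2 be an isomorphism of double quasi-Poisson algebras (a bijective morphism of double brackets between double quasi-Poisson algebras over B). If A1, A2 are quasi-Hamiltonian algebras with multiplicative moment maps Φ₁, Φ₂, then there exist ν_s ∈ k∖{0} for each s ∈ I such that Φ₂ = ν·ψ(Φ₁), where ν := Σ_{s∈I} ν_s e_s ∈ B is invertible; equivalently e_s Φ₂ e_s = ν_s ψ(e_s Φ₁ e_s) for all s ∈ I. In particular, a multiplicative moment map is unique up to multiplication by an invertible element of B. -/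
open TensorProduct

noncomputable section

/-- If `u ⊗ v = v ⊗ u` with `u ≠ 0`, then `v` is a scalar multiple of `u`. -/
lemma aux_tmul_comm_dep {k V : Type*} [Field k] [AddCommGroup V] [Module k V]
    {u v : V} (hu : u ≠ 0) (h : u ⊗ₜ[k] v = v ⊗ₜ[k] u) : ∃ c : k, v = c • u := by
  obtain ⟨f, hf⟩ : ∃ f : Module.Dual k V, f u ≠ 0 := by
    by_contra hc
    push_neg at hc
    exact hu ((Module.forall_dual_apply_eq_zero_iff k u).1 hc)
  let g : V ⊗[k] V →ₗ[k] V := TensorProduct.lift ((LinearMap.lsmul k V).comp f)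
  have hg : ∀ x y : V, g (x ⊗ₜ[k] y) = f x • y := fun x y => rfl
  have h2 := congrArg g h
  rw [hg, hg] at h2
  exact ⟨(f u)⁻¹ * f v, by rw [mul_smul, ← h2, inv_smul_smul₀ hf]⟩

/-- Core computation: two elements satisfying the mutual moment-map bracket
identities have symmetric tensor square. -/
lemma aux_key_tensor {k A : Type*} [Field k] [CharZero k] [Ring A] [Algebra k A]
    (e P Q : A) (X Y : A ⊗[k] A)
    (hQe : Q * e = Q) (heQ : e * Q = Q) (hPe : P * e = P) (heP : e * P = P)
    (hA : X = (1/2:k) • ((Q*e) ⊗ₜ[k] P - e ⊗ₜ[k] (P*Q) + (Q*P) ⊗ₜ[k] e - P ⊗ₜ[k] (e*Q)))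
    (hB : Y = (1/2:k) • ((P*e) ⊗ₜ[k] Q - e ⊗ₜ[k] (Q*P) + (P*Q) ⊗ₜ[k] e - Q ⊗ₜ[k] (e*P)))
    (hanti : X = - flipT k A Y) :
    Q ⊗ₜ[k] P = P ⊗ₜ[k] Q := by
  rw [hQe, heQ] at hA
  rw [hPe, heP] at hB
  rw [hA, hB] at hanti
  simp only [flipT, map_smul, map_sub, map_add, TensorProduct.comm_tmul,
    LinearEquiv.coe_coe] at hanti
  have h2 : (Q ⊗ₜ[k] P - e ⊗ₜ[k] (P*Q) + (Q*P) ⊗ₜ[k] e - P ⊗ₜ[k] Q)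
      = -(Q ⊗ₜ[k] P - (Q*P) ⊗ₜ[k] e + e ⊗ₜ[k] (P*Q) - P ⊗ₜ[k] Q) := by
    rw [← smul_neg] at hanti
    exact smul_right_injective _ (by norm_num : (1/2:k) ≠ 0) hanti
  have h4 : Q ⊗ₜ[k] P + Q ⊗ₜ[k] P = P ⊗ₜ[k] Q + P ⊗ₜ[k] Q := by
    abel_nf at h2 ⊢
    linear_combination (norm := abel) h2
  have h3 : (2:k) • (Q ⊗ₜ[k] P) = (2:k) • (P ⊗ₜ[k] Q) := by
    rw [two_smul, two_smul, h4]
  exact smul_right_injective _ (by norm_num : (2:k) ≠ 0) h3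

/-- If ψ : A1 → A2 is an isomorphism of double quasi-Poisson algebras
and A1, A2 are quasi-Hamiltonian with multiplicative moment maps Φ₁, Φ₂, then there are
nonzero scalars ν_s with Φ₂ = (Σ_s ν_s e_s)·ψ(Φ₁), i.e. e_s Φ₂ e_s = ν_s ψ(e_s Φ₁ e_s)
for each s. In particular a multiplicative moment map is unique up to multiplication by
an invertible element of B. -/
theorem iso_multMomentMap_unique_up_to_unit
    {k : Type*} [Field k] [CharZero k]
    {A1 : Type*} [Ring A1] [Algebra k A1]
    {A2 : Type*} [Ring A2] [Algebra k A2]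
    {I : Type*} [Fintype I]
    (e1 : I → A1) (e2 : I → A2)
    (he1_idem : ∀ s, e1 s * e1 s = e1 s)
    (he1_orth : ∀ s t, s ≠ t → e1 s * e1 t = 0)
    (he1_sum : ∑ s, e1 s = 1)
    (he1_ne : ∀ s, e1 s ≠ 0)
    (he2_idem : ∀ s, e2 s * e2 s = e2 s)
    (he2_orth : ∀ s t, s ≠ t → e2 s * e2 t = 0)
    (he2_sum : ∑ s, e2 s = 1)
    (he2_ne : ∀ s, e2 s ≠ 0)
    (D1 : A1 →ₗ[k] A1 →ₗ[k] A1 ⊗[k] A1)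
    (D2 : A2 →ₗ[k] A2 →ₗ[k] A2 ⊗[k] A2)
    (hD1 : IsDoubleBracket D1) (hD2 : IsDoubleBracket D2)
    (hD1B : ∀ (s : I) (a : A1), D1 (e1 s) a = 0 ∧ D1 a (e1 s) = 0)
    (hD2B : ∀ (s : I) (a : A2), D2 (e2 s) a = 0 ∧ D2 a (e2 s) = 0)
    (φ : A1 →ₐ[k] A2)
    (hφe : ∀ s, φ (e1 s) = e2 s)
    (hφD : ∀ a b : A1,
      TensorProduct.map φ.toLinearMap φ.toLinearMap (D1 a b) = D2 (φ a) (φ b))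
    (hφbij : Function.Bijective φ)
    (hQ1 : ∀ a b c : A1, tripleBracket D1 a b c = quasiTerm e1 a b c)
    (hQ2 : ∀ a b c : A2, tripleBracket D2 a b c = quasiTerm e2 a b c)
    (Φ₁ : A1) (hΦ₁ : IsMultMomentMap e1 D1 Φ₁)
    (Φ₂ : A2) (hΦ₂ : IsMultMomentMap e2 D2 Φ₂) :
    ∃ ν : I → k, (∀ s, ν s ≠ 0) ∧
      Φ₂ = (∑ s, ν s • e2 s) * φ Φ₁ ∧
      ∀ s : I, e2 s * Φ₂ * e2 s = ν s • φ (e1 s * Φ₁ * e1 s) := by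
  obtain ⟨hΦ₂u, hΦ₂off, hΦ₂mm⟩ := hΦ₂
  obtain ⟨hΦ₁u, hΦ₁off, hΦ₁mm⟩ := hΦ₁
  obtain ⟨u2, hu2⟩ := hΦ₂u
  obtain ⟨u1, hu1⟩ := hΦ₁u
  -- diagonality of Φ₂ and Φ₁
  have hdiag2 : ∀ s, Φ₂ * e2 s = e2 s * Φ₂ * e2 s := by
    intro s
    conv_lhs => rw [← one_mul (Φ₂ * e2 s), ← he2_sum, Finset.sum_mul]
    rw [Finset.sum_eq_single s
      (fun t _ hts => by rw [← mul_assoc]; exact hΦ₂off t s hts)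
      (fun h => absurd (Finset.mem_univ s) h), ← mul_assoc]
  have hdiag1 : ∀ s, e1 s * Φ₁ = e1 s * Φ₁ * e1 s := by
    intro s
    conv_lhs => rw [← mul_one (e1 s * Φ₁), ← he1_sum, Finset.mul_sum]
    exact Finset.sum_eq_single s
      (fun t _ hts => hΦ₁off s t (fun h => hts h.symm))
      (fun h => absurd (Finset.mem_univ s) h)
  -- nonvanishing of diagonal blocks
  have hP2ne : ∀ s, e2 s * Φ₂ * e2 s ≠ 0 := by
    intro s h
    rw [← hdiag2] at h
    apply he2_ne s
    calc e2 s = ↑u2⁻¹ * (Φ₂ * e2 s) := by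
          rw [← hu2, ← mul_assoc, u2.inv_mul, one_mul]
      _ = 0 := by rw [h, mul_zero]
  have hP1ne : ∀ s, e1 s * Φ₁ * e1 s ≠ 0 := by
    intro s h
    rw [← hdiag1] at h
    apply he1_ne s
    calc e1 s = (e1 s * Φ₁) * ↑u1⁻¹ := by
          rw [← hu1, mul_assoc, u1.mul_inv, mul_one]
      _ = 0 := by rw [h, zero_mul]
  -- key pointwise proportionality
  have key : ∀ s, ∃ c : k, e2 s * Φ₂ * e2 s = c • φ (e1 s * Φ₁ * e1 s) := by
    intro s
    have hQ' : φ (e1 s * Φ₁ * e1 s) = e2 s * φ Φ₁ * e2 s := by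
      simp only [map_mul, hφe]
    have hPe : (e2 s * Φ₂ * e2 s) * e2 s = e2 s * Φ₂ * e2 s := by
      rw [mul_assoc, he2_idem]
    have heP : e2 s * (e2 s * Φ₂ * e2 s) = e2 s * Φ₂ * e2 s := by
      simp only [← mul_assoc]; rw [he2_idem]
    have hQe : φ (e1 s * Φ₁ * e1 s) * e2 s = φ (e1 s * Φ₁ * e1 s) := by
      rw [hQ', mul_assoc, he2_idem]
    have heQ : e2 s * φ (e1 s * Φ₁ * e1 s) = φ (e1 s * Φ₁ * e1 s) := by
      rw [hQ']; simp only [← mul_assoc]; rw [he2_idem]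
    have hA := hΦ₂mm s (φ (e1 s * Φ₁ * e1 s))
    -- transported moment-map identity for φ Φ₁
    obtain ⟨b, hb⟩ := hφbij.2 (e2 s * Φ₂ * e2 s)
    have hB := hφD (e1 s * Φ₁ * e1 s) b
    rw [hΦ₁mm s b] at hB
    simp only [map_smul, map_sub, map_add, TensorProduct.map_tmul,
      AlgHom.toLinearMap_apply, map_mul, hφe, hb] at hB
    rw [← hQ'] at hB
    have hanti := hD2.cyclic_antisymm (e2 s * Φ₂ * e2 s) (φ (e1 s * Φ₁ * e1 s))
    rw [← hB] at hanti
    have hQne : φ (e1 s * Φ₁ * e1 s) ≠ 0 := fun h =>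
      hP1ne s (hφbij.1 (by rw [h, map_zero]))
    refine aux_tmul_comm_dep hQne
      (aux_key_tensor (e2 s) (e2 s * Φ₂ * e2 s) (φ (e1 s * Φ₁ * e1 s)) _ _
        hQe heQ hPe heP hA rfl hanti)
  choose ν hν using key
  have hνne : ∀ s, ν s ≠ 0 := by
    intro s h
    exact hP2ne s (by rw [hν s, h, zero_smul])
  refine ⟨ν, hνne, ?_, hν⟩
  have hsum : Φ₂ = ∑ s, e2 s * Φ₂ * e2 s := by
    conv_lhs => rw [← mul_one Φ₂, ← he2_sum, Finset.mul_sum]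
    exact Finset.sum_congr rfl (fun s _ => hdiag2 s)
  rw [hsum, Finset.sum_mul]
  refine Finset.sum_congr rfl fun s _ => ?_
  rw [hν s, smul_mul_assoc]
  congr 1
  rw [← hdiag1 s, map_mul, hφe]
end
end

section
/- Let ⟪−,−⟫ be a double bracket on A such that for all a,b,c ∈ A the image of the associated triple bracket ⟪a,b,c⟫ under the multiplication map A⊗A⊗A → A, u⊗v⊗w ↦ uvw, is zero (this holds in particular for any double Poisson or double quasi-Poisson bracket). Then, with {a,b} := m(⟪a,b⟫), one has {a,{b,c}} − {b,{a,c}} − {{a,b},c} = 0 for all a,b,c ∈ A, and consequently the cyclic Jacobi identity holds modulo commutators: {a,{b,c}} + {b,{c,a}} + {c,{a,b}} ∈ [A,A]. Hence the induced antisymmetric bracket on H₀(A) := A/[A,A] is a Lie bracket. -/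
open TensorProduct

noncomputable section

/-- The multiplication map `A ⊗ A → A`, `u ⊗ v ↦ u v`. -/
def mulT2 (k A : Type*) [CommRing k] [Ring A] [Algebra k A] :
    A ⊗[k] A →ₗ[k] A :=
  LinearMap.mul' k A

/-- The multiplication map `A ⊗ A ⊗ A → A`, `u ⊗ v ⊗ w ↦ u v w`. -/
def mulT3 (k A : Type*) [CommRing k] [Ring A] [Algebra k A] :
    A ⊗[k] (A ⊗[k] A) →ₗ[k] A :=
  LinearMap.mul' k A ∘ₗ TensorProduct.map LinearMap.id (LinearMap.mul' k A)

/-- `[A,A]`, the k-linear span of commutators in `A`. -/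
def commutatorSpan (k A : Type*) [CommRing k] [Ring A] [Algebra k A] :
    Submodule k A :=
  Submodule.span k {x : A | ∃ a b : A, x = a * b - b * a}

/-- The two-sided ideal of `A` generated by `x` (as a k-submodule: the span of
all elements `p * x * q`). -/
def twoSidedSpan (k : Type*) {A : Type*} [CommRing k] [Ring A] [Algebra k A]
    (x : A) : Submodule k A :=
  Submodule.span k {y : A | ∃ p q : A, y = p * x * q}

set_option synthInstance.maxHeartbeats 1000000

namespace Aux
variable {k : Type*} [CommRing k] {A : Type*} [Ring A] [Algebra k A]

@[simp] lemma mulT2_tmul (p q : A) : mulT2 k A (p ⊗ₜ[k] q) = p * q := rfl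
@[simp] lemma mulT3_tmul (p q r : A) : mulT3 k A (p ⊗ₜ[k] (q ⊗ₜ[k] r)) = p * (q * r) := rfl
@[simp] lemma flipT_tmul (p q : A) : flipT k A (p ⊗ₜ[k] q) = q ⊗ₜ[k] p := rfl
@[simp] lemma tau3_tmul (p q r : A) :
    tau3 k A (p ⊗ₜ[k] (q ⊗ₜ[k] r)) = r ⊗ₜ[k] (p ⊗ₜ[k] q) := rfl
@[simp] lemma outR_tmul (c p q : A) : outR k c (p ⊗ₜ[k] q) = p ⊗ₜ[k] (q * c) := rfl
@[simp] lemma outL_tmul (b p q : A) : outL k b (p ⊗ₜ[k] q) = (b * p) ⊗ₜ[k] q := rfl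

lemma dblExt_tmul (D : A →ₗ[k] A →ₗ[k] A ⊗[k] A) (a u v : A) :
    dblExt D a (u ⊗ₜ[k] v) = (TensorProduct.assoc k A A A) ((D a u) ⊗ₜ[k] v) := rfl

lemma m2_outR (c : A) (t : A ⊗[k] A) : mulT2 k A (outR k c t) = mulT2 k A t * c := by
  induction t using TensorProduct.induction_on with
  | zero => simp
  | tmul p q => simp [mul_assoc]
  | add x y hx hy => simp [map_add, hx, hy, add_mul]

lemma m2_outL (b : A) (t : A ⊗[k] A) : mulT2 k A (outL k b t) = b * mulT2 k A t := by
  induction t using TensorProduct.induction_on with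
  | zero => simp
  | tmul p q => simp [mul_assoc]
  | add x y hx hy => simp [map_add, hx, hy, mul_add]

lemma l1 (w : A ⊗[k] A) (v : A) :
    mulT3 k A ((TensorProduct.assoc k A A A) (w ⊗ₜ[k] v)) = mulT2 k A w * v := by
  induction w using TensorProduct.induction_on with
  | zero => simp
  | tmul p q => simp [mul_assoc]
  | add x y hx hy => simp [add_tmul, map_add, hx, hy, add_mul]

lemma l2 (w : A ⊗[k] A) (t : A) :
    mulT3 k A (tau3 k A ((TensorProduct.assoc k A A A) (w ⊗ₜ[k] t))) = t * mulT2 k A w := by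
  induction w using TensorProduct.induction_on with
  | zero => simp
  | tmul p q => simp
  | add x y hx hy => simp [add_tmul, map_add, hx, hy, mul_add]

lemma l3 (w : A ⊗[k] A) (f : A) :
    mulT3 k A (tau3 k A (tau3 k A ((TensorProduct.assoc k A A A) (w ⊗ₜ[k] f))))
      = mulT2 k A (flipT k A (outR k f w)) := by
  induction w using TensorProduct.induction_on with
  | zero => simp
  | tmul p q => simp [mul_assoc]
  | add x y hx hy => simp [add_tmul, map_add, hx, hy]

lemma l4 (e : A) (w : A ⊗[k] A) :
    mulT2 k A (flipT k A (outL k e w)) = mulT2 k A (flipT k A (outR k e w)) := by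
  induction w using TensorProduct.induction_on with
  | zero => simp
  | tmul p q => simp [mul_assoc]
  | add x y hx hy => simp [map_add, hx, hy]


variable {D : A →ₗ[k] A →ₗ[k] A ⊗[k] A}

lemma claim1 (hD : IsDoubleBracket D) (a : A) (w : A ⊗[k] A) :
    mulT2 k A (D a (mulT2 k A w))
      = mulT3 k A (dblExt D a w) + mulT3 k A (tau3 k A (dblExt D a (flipT k A w))) := by
  induction w using TensorProduct.induction_on with
  | zero => simp
  | tmul u v =>
      rw [mulT2_tmul, hD.derivation a u v, map_add, m2_outR, m2_outL,
        flipT_tmul, dblExt_tmul, dblExt_tmul, l1, l2]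
  | add x y hx hy =>
      simp only [map_add, hx, hy]
      abel

lemma claim2 (hD : IsDoubleBracket D) (c : A) (w : A ⊗[k] A) :
    mulT2 k A (D (mulT2 k A w) c)
      = -(mulT3 k A (tau3 k A (tau3 k A (dblExt D c w)))
          + mulT3 k A (tau3 k A (tau3 k A (dblExt D c (flipT k A w))))) := by
  induction w using TensorProduct.induction_on with
  | zero => simp
  | tmul e f =>
      rw [mulT2_tmul, hD.cyclic_antisymm (e * f) c, hD.derivation c e f]
      simp only [map_neg, map_add]
      rw [l4, flipT_tmul, dblExt_tmul, dblExt_tmul, l3, l3]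
  | add x y hx hy =>
      simp only [map_add, LinearMap.add_apply, hx, hy]
      abel


lemma m2_deriv (hD : IsDoubleBracket D) (b p q : A) :
    mulT2 k A (D b (p * q)) = mulT2 k A (D b p) * q + p * mulT2 k A (D b q) := by
  rw [hD.derivation, map_add, m2_outR, m2_outL]

lemma sub_flip_mem (w : A ⊗[k] A) :
    mulT2 k A w - mulT2 k A (flipT k A w) ∈ commutatorSpan k A := by
  induction w using TensorProduct.induction_on with
  | zero => simp
  | tmul p q => exact Submodule.subset_span ⟨p, q, by simp⟩
  | add x y hx hy => simpa [map_add, add_sub_add_comm] using add_mem hx hy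

lemma antisym_mem (hD : IsDoubleBracket D) (a b : A) :
    mulT2 k A (D a b) + mulT2 k A (D b a) ∈ commutatorSpan k A := by
  rw [hD.cyclic_antisymm b a, map_neg, ← sub_eq_add_neg]
  exact sub_flip_mem (D a b)

lemma bracket_comm_mem (hD : IsDoubleBracket D) (b : A) {x : A}
    (hx : x ∈ commutatorSpan k A) : mulT2 k A (D b x) ∈ commutatorSpan k A := by
  induction hx using Submodule.span_induction with
  | mem x h =>
      obtain ⟨p, q, rfl⟩ := h
      have e : mulT2 k A (D b (p * q - q * p))
          = (mulT2 k A (D b p) * q - q * mulT2 k A (D b p))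
            + (p * mulT2 k A (D b q) - mulT2 k A (D b q) * p) := by
        rw [map_sub, map_sub, m2_deriv hD, m2_deriv hD]
        abel
      rw [e]
      exact add_mem (Submodule.subset_span ⟨mulT2 k A (D b p), q, rfl⟩)
        (Submodule.subset_span ⟨p, mulT2 k A (D b q), rfl⟩)
  | zero => simp
  | add x y _ _ hx hy => rw [map_add, map_add]; exact add_mem hx hy
  | smul r x _ hx => rw [map_smul, map_smul]; exact Submodule.smul_mem _ r hx

end Aux

/-- Let ⟪−,−⟫ be a double bracket on A whose associated triple bracket
multiplies to zero (as holds for double Poisson and double quasi-Poisson brackets).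
With {a,b} := m(⟪a,b⟫), one has {a,{b,c}} − {b,{a,c}} − {{a,b},c} = 0; consequently the
bracket is antisymmetric modulo commutators and satisfies the cyclic Jacobi identity
modulo commutators, so the induced antisymmetric bracket on H₀(A) = A/[A,A] is a Lie
bracket. -/
theorem mul_tripleBracket_zero_gives_Lie
    {k : Type*} [Field k] [CharZero k]
    {A : Type*} [Ring A] [Algebra k A]
    (D : A →ₗ[k] A →ₗ[k] A ⊗[k] A)
    (hD : IsDoubleBracket D)
    (hm3 : ∀ a b c : A, mulT3 k A (tripleBracket D a b c) = 0) :
    (∀ a b c : A,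
      mulT2 k A (D a (mulT2 k A (D b c)))
        - mulT2 k A (D b (mulT2 k A (D a c)))
        - mulT2 k A (D (mulT2 k A (D a b)) c) = 0) ∧
    (∀ a b : A, mulT2 k A (D a b) + mulT2 k A (D b a) ∈ commutatorSpan k A) ∧
    (∀ a b c : A,
      mulT2 k A (D a (mulT2 k A (D b c)))
        + mulT2 k A (D b (mulT2 k A (D c a)))
        + mulT2 k A (D c (mulT2 k A (D a b))) ∈ commutatorSpan k A) := by
  have key : ∀ a b c : A,
      mulT2 k A (D a (mulT2 k A (D b c)))
        - mulT2 k A (D b (mulT2 k A (D a c)))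
        - mulT2 k A (D (mulT2 k A (D a b)) c) = 0 := by
    intro a b c
    have h1 := hm3 a b c
    have h2 := hm3 b a c
    simp only [tripleBracket, hD.cyclic_antisymm c a, hD.cyclic_antisymm c b,
      hD.cyclic_antisymm b a, map_neg, map_add] at h1 h2
    rw [Aux.claim1 hD a (D b c), Aux.claim1 hD b (D a c), Aux.claim2 hD c (D a b)]
    linear_combination (norm := abel1) h1 - h2
  refine ⟨key, fun a b => Aux.antisym_mem hD a b, fun a b c => ?_⟩
  have hk := key a b c
  rw [sub_sub, sub_eq_zero] at hk
  have m1 : mulT2 k A (D b (mulT2 k A (D a c) + mulT2 k A (D c a))) ∈ commutatorSpan k A :=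
    Aux.bracket_comm_mem hD b (Aux.antisym_mem hD a c)
  have m2 : mulT2 k A (D (mulT2 k A (D a b)) c) + mulT2 k A (D c (mulT2 k A (D a b)))
      ∈ commutatorSpan k A :=
    Aux.antisym_mem hD (mulT2 k A (D a b)) c
  have e2 : mulT2 k A (D a (mulT2 k A (D b c))) + mulT2 k A (D b (mulT2 k A (D c a)))
        + mulT2 k A (D c (mulT2 k A (D a b)))
      = mulT2 k A (D b (mulT2 k A (D a c) + mulT2 k A (D c a)))
        + (mulT2 k A (D (mulT2 k A (D a b)) c) + mulT2 k A (D c (mulT2 k A (D a b)))) := by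
    rw [hk, map_add, map_add]
    abel
  rw [e2]
  exact add_mem m1 m2
end
end

section
/- Let ⟪−,−⟫ be a B-linear double bracket on A admitting a moment map μ, and set {a,b} := m(⟪a,b⟫). Then {a, μ_s} = 0 for all a ∈ A and all s ∈ I, hence {a, μ} = 0 for all a ∈ A. Consequently, for every λ = Σ_{s∈I} λ_s e_s ∈ B and every element x of the two-sided ideal (μ−λ) of A generated by μ−λ, one has {a, x} ∈ (μ−λ) for all a ∈ A; thus the induced bracket on H₀(A) = A/[A,A] descends to the quotient A/(μ−λ). -/
open TensorProduct

noncomputable section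

/-- For a B-linear double bracket with moment map μ and
{a,b} := m(⟪a,b⟫): {a, μ_s} = 0 for all s, hence {a, μ} = 0; and for any λ ∈ B the
bracket preserves the two-sided ideal (μ − λ), so the induced bracket on H₀(A) descends
to A/(μ−λ). -/
theorem momentMap_bracket_descends
    {k : Type*} [Field k] [CharZero k]
    {A : Type*} [Ring A] [Algebra k A]
    {I : Type*} [Fintype I]
    (e : I → A)
    (he_idem : ∀ s, e s * e s = e s)
    (he_orth : ∀ s t, s ≠ t → e s * e t = 0)
    (he_sum : ∑ s, e s = 1)
    (he_ne : ∀ s, e s ≠ 0)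
    (D : A →ₗ[k] A →ₗ[k] A ⊗[k] A)
    (hD : IsDoubleBracket D)
    (hDB : ∀ (s : I) (a : A), D (e s) a = 0 ∧ D a (e s) = 0)
    (μ : A) (hμ : IsMomentMap e D μ) :
    (∀ (a : A) (s : I), mulT2 k A (D a (e s * μ * e s)) = 0) ∧
    (∀ a : A, mulT2 k A (D a μ) = 0) ∧
    ∀ (lam : I → k) (a x : A),
      x ∈ twoSidedSpan k (μ - ∑ s, lam s • e s) →
      mulT2 k A (D a x) ∈ twoSidedSpan k (μ - ∑ s, lam s • e s) := by
  obtain ⟨hoff, hmom⟩ := hμ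
  have h1 : ∀ (a : A) (s : I), mulT2 k A (D a (e s * μ * e s)) = 0 := by
    intro a s
    rw [hD.cyclic_antisymm, hmom]
    simp [mulT2, flipT, mul_assoc]
  have hμdec : μ = ∑ s, e s * μ * e s := by
    have h0 : μ = ∑ s, ∑ t, e s * μ * e t := by
      calc μ = (∑ s, e s) * μ * (∑ t, e t) := by rw [he_sum]; simp
        _ = ∑ s, e s * μ * (∑ t, e t) := by rw [Finset.sum_mul, Finset.sum_mul]
        _ = ∑ s, ∑ t, e s * μ * e t :=
            Finset.sum_congr rfl fun s _ => by rw [Finset.mul_sum]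
    conv_lhs => rw [h0]
    refine Finset.sum_congr rfl fun s _ => ?_
    exact Finset.sum_eq_single s (fun t _ hts => hoff s t (Ne.symm hts)) (fun h => absurd (Finset.mem_univ s) h)
  have h2 : ∀ a : A, mulT2 k A (D a μ) = 0 := by
    intro a
    conv_lhs => rw [hμdec]
    rw [map_sum, map_sum]
    simp [h1 a]
  refine ⟨h1, h2, ?_⟩
  intro lam a x hx
  set ν := μ - ∑ s, lam s • e s with hνdef
  have hν : mulT2 k A (D a ν) = 0 := by
    rw [hνdef, map_sub, map_sum]
    simp [(fun s => (hDB s a).2), h2 a]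
  have hmR : ∀ (c : A) (x : A ⊗[k] A), mulT2 k A (outR k c x) = mulT2 k A x * c := by
    intro c x
    induction x using TensorProduct.induction_on with
    | zero => simp
    | tmul u v => simp [mulT2, outR, mul_assoc]
    | add x y hx hy => simp only [map_add, hx, hy, add_mul]
  have hmL : ∀ (b : A) (x : A ⊗[k] A), mulT2 k A (outL k b x) = b * mulT2 k A x := by
    intro b x
    induction x using TensorProduct.induction_on with
    | zero => simp
    | tmul u v => simp [mulT2, outL, mul_assoc]
    | add x y hx hy => simp only [map_add, hx, hy, mul_add]
  induction hx using Submodule.span_induction with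
  | mem y hy =>
    obtain ⟨p, q, rfl⟩ := hy
    rw [hD.derivation a (p * ν) q, map_add, hmR, hmL,
        hD.derivation a p ν, map_add, hmR, hmL, hν]
    have m1 : (mulT2 k A (D a p) * ν + p * 0) * q ∈ twoSidedSpan k ν := by
      rw [mul_zero, add_zero]
      exact Submodule.subset_span ⟨mulT2 k A (D a p), q, rfl⟩
    have m2 : (p * ν) * mulT2 k A (D a q) ∈ twoSidedSpan k ν :=
      Submodule.subset_span ⟨p, mulT2 k A (D a q), by rw [mul_assoc]⟩
    exact Submodule.add_mem _ m1 m2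
  | zero => simp
  | add y z _ _ hy hz => rw [map_add, map_add]; exact Submodule.add_mem _ hy hz
  | smul c y _ hy => rw [map_smul, map_smul]; exact Submodule.smul_mem _ c hy
end
end

section
/- Let ⟪−,−⟫ be a B-linear double bracket on A admitting a multiplicative moment map Φ, and set {a,b} := m(⟪a,b⟫). Then {a, Φ_s} = 0 for all a ∈ A and all s ∈ I, hence {a, Φ} = 0 for all a ∈ A. Consequently, for every c = Σ_{s∈I} c_s e_s with all c_s ∈ k∖{0} and every element x of the two-sided ideal (Φ−c) of A generated by Φ−c, one has {a, x} ∈ (Φ−c) for all a ∈ A; thus the induced bracket on H₀(A) = A/[A,A] descends to the quotient A/(Φ−c). -/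
open TensorProduct

noncomputable section

/-- For a B-linear double bracket with multiplicative moment map Φ and
{a,b} := m(⟪a,b⟫): {a, Φ_s} = 0 for all s, hence {a, Φ} = 0; and for any c = Σ c_s e_s
with all c_s ≠ 0, the bracket preserves the two-sided ideal (Φ − c), so the induced
bracket on H₀(A) descends to A/(Φ−c). -/
theorem multMomentMap_bracket_descends
    {k : Type*} [Field k] [CharZero k]
    {A : Type*} [Ring A] [Algebra k A]
    {I : Type*} [Fintype I]
    (e : I → A)
    (he_idem : ∀ s, e s * e s = e s)
    (he_orth : ∀ s t, s ≠ t → e s * e t = 0)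
    (he_sum : ∑ s, e s = 1)
    (he_ne : ∀ s, e s ≠ 0)
    (D : A →ₗ[k] A →ₗ[k] A ⊗[k] A)
    (hD : IsDoubleBracket D)
    (hDB : ∀ (s : I) (a : A), D (e s) a = 0 ∧ D a (e s) = 0)
    (Φ : A) (hΦ : IsMultMomentMap e D Φ) :
    (∀ (a : A) (s : I), mulT2 k A (D a (e s * Φ * e s)) = 0) ∧
    (∀ a : A, mulT2 k A (D a Φ) = 0) ∧
    ∀ (c : I → k), (∀ s, c s ≠ 0) →
      ∀ (a x : A),
        x ∈ twoSidedSpan k (Φ - ∑ s, c s • e s) →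
        mulT2 k A (D a x) ∈ twoSidedSpan k (Φ - ∑ s, c s • e s) := by
  obtain ⟨hunit, hoff, hmm⟩ := hΦ
  have mul_outR : ∀ (c : A) (t : A ⊗[k] A),
      mulT2 k A (outR k c t) = mulT2 k A t * c := by
    intro c t
    have h : (mulT2 k A) ∘ₗ (outR k c) = (LinearMap.mulRight k c) ∘ₗ mulT2 k A := by
      apply TensorProduct.ext'
      intro u v
      simp [mulT2, outR, LinearMap.mul'_apply, mul_assoc]
    exact LinearMap.congr_fun h t
  have mul_outL : ∀ (b : A) (t : A ⊗[k] A),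
      mulT2 k A (outL k b t) = b * mulT2 k A t := by
    intro b t
    have h : (mulT2 k A) ∘ₗ (outL k b) = (LinearMap.mulLeft k b) ∘ₗ mulT2 k A := by
      apply TensorProduct.ext'
      intro u v
      simp [mulT2, outL, LinearMap.mul'_apply, mul_assoc]
    exact LinearMap.congr_fun h t
  have key : ∀ (a : A) (s : I), mulT2 k A (D a (e s * Φ * e s)) = 0 := by
    intro a s
    have h1 : D a (e s * Φ * e s) = - flipT k A (D (e s * Φ * e s) a) :=
      hD.cyclic_antisymm a _
    rw [h1, hmm s a]
    simp only [flipT, mulT2, map_neg, map_smul, map_sub, map_add,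
      TensorProduct.comm_tmul, LinearEquiv.coe_coe, LinearMap.mul'_apply]
    have h0 : e s * Φ * e s * (a * e s) - e s * Φ * e s * a * e s
        + e s * (a * (e s * Φ * e s)) - e s * a * (e s * Φ * e s) = 0 := by
      noncomm_ring
    rw [h0]
    simp
  have hΦsum : Φ = ∑ s, e s * Φ * e s := by
    calc Φ = (∑ s, e s) * Φ := by rw [he_sum, one_mul]
      _ = ∑ s, e s * Φ := by rw [Finset.sum_mul]
      _ = ∑ s, e s * Φ * e s := by
          refine Finset.sum_congr rfl fun s _ => ?_
          have h2 : e s * Φ = e s * Φ * (∑ t, e t) := by rw [he_sum, mul_one]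
          rw [h2, Finset.mul_sum,
            Finset.sum_eq_single s (fun t _ hts => hoff s t (Ne.symm hts)) (by simp),
            mul_assoc (e s * Φ) (e s) (e s), he_idem s]
  have keyΦ : ∀ a : A, mulT2 k A (D a Φ) = 0 := by
    intro a
    rw [hΦsum, map_sum, map_sum]
    exact Finset.sum_eq_zero fun s _ => key a s
  refine ⟨key, keyΦ, ?_⟩
  intro c hc a x hx
  set y : A := Φ - ∑ s, c s • e s with hy
  have hmy : mulT2 k A (D a y) = 0 := by
    have : D a y = D a Φ - ∑ s, c s • D a (e s) := by
      simp [hy, map_sub, map_sum, map_smul]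
    rw [this]
    simp [map_sub, map_sum, keyΦ, (hDB _ a).2]
  have hgen : ∀ p q : A, mulT2 k A (D a (p * y * q)) ∈ twoSidedSpan k y := by
    intro p q
    have h1 : D a (p * y * q) = outR k q (D a (p * y)) + outL k (p * y) (D a q) :=
      hD.derivation a (p * y) q
    have h2 : D a (p * y) = outR k y (D a p) + outL k p (D a y) :=
      hD.derivation a p y
    rw [h1, map_add, mul_outR, mul_outL, h2, map_add, mul_outR, mul_outL, hmy,
      mul_zero, add_zero]
    have m1 : mulT2 k A (D a p) * y * q ∈ twoSidedSpan k y :=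
      Submodule.subset_span ⟨_, _, rfl⟩
    have m2 : p * y * mulT2 k A (D a q) ∈ twoSidedSpan k y :=
      Submodule.subset_span ⟨p, mulT2 k A (D a q), rfl⟩
    exact Submodule.add_mem _ m1 m2
  refine Submodule.span_induction ?_ ?_ ?_ ?_ hx
  · rintro z ⟨p, q, rfl⟩
    exact hgen p q
  · simp
  · intro u v _ _ hu hv
    rw [map_add, map_add]
    exact Submodule.add_mem _ hu hv
  · intro r u _ hu
    rw [map_smul, map_smul]
    exact Submodule.smul_mem _ r hu
end
end

section
/- Let m ≥ 1, n ≥ 1, let λ₀, …, λ_{m−1} ∈ ℂ and set ℓ := λ₀ + ⋯ + λ_{m−1}. Let q₁, …, q_n ∈ ℂ be nonzero with q_i^m ≠ q_j^m for all i ≠ j, and let p₁, …, p_n ∈ ℂ. For each s ∈ {0,…,m−1} define the n×n complex matrices X_s := diag(q₁,…,q_n) and X*_s by (X*_s)_{jj} := p_j + (λ₁ + ⋯ + λ_s)/q_j (the sum λ₁+⋯+λ_s being empty, hence 0, when s = 0) and (X*_s)_{ij} := −ℓ·q_i^{m−s−1} q_j^{s} / (q_i^m − q_j^m) for i ≠ j;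 let V be the 1×n matrix (1,…,1) and V* the n×1 matrix −ℓ·(1,…,1)ᵀ. Then, reading the index s−1 modulo m, for every s ∈ {0,…,m−1}: X_s X*_s − X*_{s−1} X_{s−1} − δ_{s,0} V* V = λ_s · Id_n. -/
open scoped BigOperators

noncomputable section

/-- The matrix `X*_s` of the local slice: diagonal entries
`p_j + (λ₁ + ⋯ + λ_s)/q_j`, off-diagonal entries
`−ℓ · q_i^{m−s−1} q_j^s / (q_i^m − q_j^m)` where `ℓ = λ₀ + ⋯ + λ_{m−1}`. -/
def XstarCM (m : ℕ) (lam : ℕ → ℂ) {n : ℕ} (q p : Fin n → ℂ) (s : ℕ) :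
    Matrix (Fin n) (Fin n) ℂ :=
  Matrix.of fun i j =>
    if i = j then
      p j + (∑ r ∈ Finset.Icc 1 s, lam r) / q j
    else
      -(∑ r ∈ Finset.range m, lam r) * q i ^ (m - s - 1) * q j ^ s
        / (q i ^ m - q j ^ m)

/-- The row vector `V = (1,…,1)`. -/
def VrowCM (n : ℕ) : Matrix (Fin 1) (Fin n) ℂ := Matrix.of fun _ _ => 1

/-- The column vector `V* = −ℓ·(1,…,1)ᵀ`. -/
def VstarCM (n : ℕ) (ℓ : ℂ) : Matrix (Fin n) (Fin 1) ℂ := Matrix.of fun _ _ => -ℓ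

lemma VV_auxCM (n : ℕ) (ℓ : ℂ) (i j : Fin n) :
    (VstarCM n ℓ * VrowCM n) i j = -ℓ := by
  simp [VstarCM, VrowCM, Matrix.mul_apply]

/-- The local slice `X_s = diag(q₁,…,q_n)`, `X*_s` as above,
`V = (1,…,1)`, `V* = −ℓ(1,…,1)ᵀ` satisfies the moment map equations
`X_s X*_s − X*_{s−1} X_{s−1} − δ_{s,0} V* V = λ_s Id_n` for all `s ∈ {0,…,m−1}`,
where `s − 1` is read modulo `m`. -/
theorem rationalCM_slice_momentMap_equations
    (m n : ℕ) (hm : 1 ≤ m) (hn : 1 ≤ n)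
    (lam : ℕ → ℂ) (q p : Fin n → ℂ)
    (hq0 : ∀ i, q i ≠ 0)
    (hqm : ∀ i j, i ≠ j → q i ^ m ≠ q j ^ m) :
    ∀ s, s < m →
      Matrix.diagonal q * XstarCM m lam q p s
          - XstarCM m lam q p ((s + m - 1) % m) * Matrix.diagonal q
          - (if s = 0 then
              VstarCM n (∑ r ∈ Finset.range m, lam r) * VrowCM n
            else 0)
        = lam s • (1 : Matrix (Fin n) (Fin n) ℂ) := by
  intro s hs
  ext i j
  rcases eq_or_ne s 0 with rfl | hs0
  · have hmod : (0 + m - 1) % m = m - 1 := by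
      have h1 : 0 + m - 1 = m - 1 := by omega
      rw [h1, Nat.mod_eq_of_lt (by omega)]
    rw [hmod]
    obtain ⟨u, rfl⟩ : ∃ u, m = u + 1 := ⟨m - 1, by omega⟩
    have hsum : ∑ r ∈ Finset.range (u + 1), lam r
        = lam 0 + ∑ r ∈ Finset.Icc 1 u, lam r := by
      rw [Finset.sum_range_succ']
      have : ∑ r ∈ Finset.Icc 1 u, lam r = ∑ i ∈ Finset.range u, lam (i + 1) := by
        rw [show Finset.Icc 1 u = Finset.Ico 1 (u + 1) by rw [Finset.Ico_add_one_right_eq_Icc],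
          Finset.sum_Ico_eq_sum_range]
        simp [add_comm]
      rw [this, add_comm]
    by_cases hij : i = j
    · subst hij
      simp only [Matrix.sub_apply, Matrix.diagonal_mul, Matrix.mul_diagonal,
        VV_auxCM, XstarCM, Matrix.of_apply, Matrix.smul_apply, Matrix.one_apply_eq, smul_eq_mul,
        mul_one, eq_self_iff_true, if_true, Nat.add_sub_cancel]
      rw [hsum]
      have := hq0 i
      field_simp
      ring_nf
      simp
    · have hD : q i ^ (u + 1) - q j ^ (u + 1) ≠ 0 := sub_ne_zero.2 (hqm i j hij)
      simp only [Matrix.sub_apply, Matrix.diagonal_mul, Matrix.mul_diagonal,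
        VV_auxCM, XstarCM, Matrix.of_apply, Matrix.smul_apply, Matrix.one_apply, smul_eq_mul,
        if_neg hij, eq_self_iff_true, if_true, Nat.add_sub_cancel, mul_zero]
      have e1 : u + 1 - 0 - 1 = u := by omega
      have e2 : u + 1 - u - 1 = 0 := by omega
      rw [e1, e2]
      field_simp
      ring
  · have hmod : (s + m - 1) % m = s - 1 := by
      have h1 : s + m - 1 = (s - 1) + 1 * m := by omega
      rw [h1, Nat.add_mul_mod_self_right, Nat.mod_eq_of_lt (by omega)]
    rw [hmod, if_neg hs0]
    obtain ⟨t, rfl⟩ : ∃ t, s = t + 1 := ⟨s - 1, by omega⟩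
    by_cases hij : i = j
    · subst hij
      simp only [Matrix.sub_apply, Matrix.diagonal_mul, Matrix.mul_diagonal,
        XstarCM, Matrix.of_apply, Matrix.smul_apply, Matrix.one_apply_eq, smul_eq_mul,
        mul_one, eq_self_iff_true, if_true, Matrix.zero_apply, sub_zero, Nat.add_sub_cancel]
      rw [Finset.sum_Icc_succ_top (by omega)]
      have := hq0 i
      field_simp
      ring
    · have hD : q i ^ m - q j ^ m ≠ 0 := sub_ne_zero.2 (hqm i j hij)
      simp only [Matrix.sub_apply, Matrix.diagonal_mul, Matrix.mul_diagonal,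
        XstarCM, Matrix.of_apply, Matrix.smul_apply, Matrix.one_apply, smul_eq_mul,
        if_neg hij, Matrix.zero_apply, sub_zero, mul_zero, Nat.add_sub_cancel]
      obtain ⟨v, rfl⟩ : ∃ v, m = t + 1 + v + 1 := ⟨m - t - 2, by omega⟩
      have e1 : t + 1 + v + 1 - (t + 1) - 1 = v := by omega
      have e2 : t + 1 + v + 1 - t - 1 = v + 1 := by omega
      rw [e1, e2]
      field_simp
      ring
end
end

section
/- Let n ≥ 1 and ℓ ∈ ℂ with ℓ ≠ 0. Let q₁, …, q_n ∈ ℂ satisfy q_i − q_j ∉ {0, ℓ, −ℓ} for all i ≠ j, and let ω₁, …, ω_n ∈ ℂ be nonzero. Define the n×n complex matrix Z̃ with entries Z̃_{ij} := −ℓ·ω_i/(q_i − q_j − ℓ) · ∏_{k≠j} (q_k − q_j − ℓ)/(q_k − q_j), the n×1 matrix W := (1,…,1)ᵀ, and the 1×n matrix W̃ with entries W̃_j := ℓ·∏_{k≠j} (q_k − q_j − ℓ)/(q_k − q_j). Then: (i) Z̃·W is the column vector (ω₁,…,ω_n)ᵀ, i.e. Σ_j Z̃_{ij} = ω_i for every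 i; (ii) diag(q₁,…,q_n)·Z̃ = Z̃·(diag(q₁,…,q_n) + ℓ·Id_n − W·W̃); (iii) Z̃ is invertible, so that Z̃⁻¹·diag(q₁,…,q_n)·Z̃ = diag(q₁,…,q_n) + ℓ·Id_n − W·W̃. -/
open scoped BigOperators

noncomputable section

/-- The gauge-fixed matrix `Z̃` with entries
`Z̃_{ij} = −ℓ·ω_i/(q_i − q_j − ℓ) · ∏_{k≠j} (q_k − q_j − ℓ)/(q_k − q_j)`. -/
def ZtilRS {n : ℕ} (ℓ : ℂ) (q ω : Fin n → ℂ) : Matrix (Fin n) (Fin n) ℂ :=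
  Matrix.of fun i j =>
    -ℓ * ω i / (q i - q j - ℓ) *
      ∏ r ∈ Finset.univ.erase j, (q r - q j - ℓ) / (q r - q j)

/-- The column vector `W = (1,…,1)ᵀ`. -/
def WcolRS (n : ℕ) : Matrix (Fin n) (Fin 1) ℂ := Matrix.of fun _ _ => 1

/-- The row vector `W̃` with entries `W̃_j = ℓ·∏_{k≠j} (q_k − q_j − ℓ)/(q_k − q_j)`. -/
def WtilRS {n : ℕ} (ℓ : ℂ) (q : Fin n → ℂ) : Matrix (Fin 1) (Fin n) ℂ :=
  Matrix.of fun _ j => ℓ * ∏ r ∈ Finset.univ.erase j, (q r - q j - ℓ) / (q r - q j)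


open Finset Polynomial


lemma lagrange_eval_sum {n : ℕ} (y : Fin n → ℂ) (hy : Function.Injective y)
    (N : Polynomial ℂ) (hN : N.degree < (n : WithBot ℕ)) (x : ℂ) :
    ∑ j, N.eval (y j) * ∏ k ∈ Finset.univ.erase j, ((x - y k) / (y j - y k))
      = N.eval x := by
  have hinj : Set.InjOn y (Finset.univ : Finset (Fin n)) := Function.Injective.injOn hy
  have h := Lagrange.eq_interpolate hinj (f := N) (by simpa using hN)
  have h2 := congrArg (Polynomial.eval x) h
  rw [Lagrange.interpolate_apply, Polynomial.eval_finset_sum] at h2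
  rw [h2]
  refine Finset.sum_congr rfl fun j _ => ?_
  rw [Polynomial.eval_mul, Polynomial.eval_C, Lagrange.basis, Polynomial.eval_prod]
  congr 1
  refine Finset.prod_congr rfl fun k hk => ?_
  rw [Lagrange.basisDivisor]
  simp [div_eq_inv_mul]

lemma rowsum_key {n : ℕ} (ℓ : ℂ) (hℓ : ℓ ≠ 0) (q : Fin n → ℂ)
    (hq : ∀ i j : Fin n, i ≠ j → q i - q j ≠ 0 ∧ q i - q j ≠ ℓ ∧ q i - q j ≠ -ℓ)
    (i : Fin n) :
    ∑ j, -ℓ/(q i - q j - ℓ) * ∏ k ∈ Finset.univ.erase j, ((q k - q j - ℓ)/(q k - q j)) = 1 := by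
  have hinj : Function.Injective q := by
    intro a b hab; by_contra hne
    exact (hq a b hne).1 (by rw [hab, sub_self])
  have hd : ∀ a b : Fin n, q a - q b - ℓ ≠ 0 := by
    intro a b
    rcases eq_or_ne a b with rfl | hab
    · simpa using hℓ
    · exact sub_ne_zero.mpr (hq a b hab).2.1
  set p1 : Polynomial ℂ := ∏ k : Fin n, (X - C (q k - ℓ)) with hp1
  set p2 : Polynomial ℂ := ∏ k : Fin n, (X - C (q k)) with hp2
  have hm1 : p1.Monic := monic_prod_of_monic _ _ fun k _ => monic_X_sub_C _
  have hm2 : p2.Monic := monic_prod_of_monic _ _ fun k _ => monic_X_sub_C _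
  have hdeg1 : p1.degree = (n : WithBot ℕ) := by
    rw [hp1, degree_prod]; simp only [degree_X_sub_C]; simp
  have hdeg2 : p2.degree = (n : WithBot ℕ) := by
    rw [hp2, degree_prod]; simp only [degree_X_sub_C]; simp
  have hNdeg : (p1 - p2).degree < (n : WithBot ℕ) := by
    have := degree_sub_lt (hdeg1.trans hdeg2.symm) hm1.ne_zero
      (by rw [hm1.leadingCoeff, hm2.leadingCoeff])
    rwa [hdeg1] at this
  have hL := lagrange_eval_sum q hinj (p1 - p2) hNdeg (q i - ℓ)
  set P : ℂ := ∏ k, (q i - q k - ℓ) with hPdef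
  have hP : P ≠ 0 := Finset.prod_ne_zero_iff.mpr fun k _ => hd i k
  have hevalx : (p1 - p2).eval (q i - ℓ) = -P := by
    rw [eval_sub, hp1, hp2, eval_prod, eval_prod]
    simp only [eval_sub, eval_X, eval_C]
    rw [Finset.prod_eq_zero (f := fun k => q i - ℓ - (q k - ℓ)) (Finset.mem_univ i)
      (by ring), zero_sub, hPdef]
    congr 1
    exact Finset.prod_congr rfl fun k _ => by ring
  have hevalj : ∀ j : Fin n, (p1 - p2).eval (q j)
      = ℓ * ∏ k ∈ Finset.univ.erase j, (q j - q k + ℓ) := by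
    intro j
    rw [eval_sub, hp1, hp2, eval_prod, eval_prod]
    simp only [eval_sub, eval_X, eval_C]
    rw [Finset.prod_eq_zero (f := fun k => q j - q k) (Finset.mem_univ j)
      (sub_self _), sub_zero, ← Finset.mul_prod_erase _ _ (Finset.mem_univ j)]
    congr 1
    · ring
    · exact Finset.prod_congr rfl fun k _ => by ring
  have hterm : ∀ j : Fin n,
      -ℓ/(q i - q j - ℓ) * ∏ k ∈ Finset.univ.erase j, ((q k - q j - ℓ)/(q k - q j))
      = -((p1 - p2).eval (q j)
          * ∏ k ∈ Finset.univ.erase j, ((q i - ℓ - q k) / (q j - q k))) / P := by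
    intro j
    rw [hevalj j,
      show P = (q i - q j - ℓ) * ∏ k ∈ Finset.univ.erase j, (q i - q k - ℓ) from
        (Finset.mul_prod_erase _ _ (Finset.mem_univ j)).symm]
    have hmerge : (∏ k ∈ Finset.univ.erase j, (q j - q k + ℓ))
        * ∏ k ∈ Finset.univ.erase j, ((q i - ℓ - q k) / (q j - q k))
        = (∏ k ∈ Finset.univ.erase j, ((q k - q j - ℓ)/(q k - q j)))
          * ∏ k ∈ Finset.univ.erase j, (q i - q k - ℓ) := by
      rw [← Finset.prod_mul_distrib, ← Finset.prod_mul_distrib]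
      refine Finset.prod_congr rfl fun k hk => ?_
      have hk' : k ≠ j := (Finset.mem_erase.mp hk).1
      have h1 : q j - q k ≠ 0 := (hq j k (Ne.symm hk')).1
      have h2 : q k - q j ≠ 0 := (hq k j hk').1
      field_simp
      ring
    have hXne : (∏ k ∈ Finset.univ.erase j, (q i - q k - ℓ)) ≠ 0 :=
      Finset.prod_ne_zero_iff.mpr fun k _ => hd i k
    rw [mul_assoc, hmerge]
    rw [div_mul_eq_mul_div, div_eq_div_iff (hd i j) (mul_ne_zero (hd i j) hXne)]
    ring
  calc ∑ j, -ℓ/(q i - q j - ℓ) * ∏ k ∈ Finset.univ.erase j, ((q k - q j - ℓ)/(q k - q j))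
      = ∑ j, -((p1 - p2).eval (q j)
          * ∏ k ∈ Finset.univ.erase j, ((q i - ℓ - q k) / (q j - q k))) / P :=
        Finset.sum_congr rfl fun j _ => hterm j
    _ = -(∑ j, (p1 - p2).eval (q j)
          * ∏ k ∈ Finset.univ.erase j, ((q i - ℓ - q k) / (q j - q k))) / P := by
        rw [← Finset.sum_div, Finset.sum_neg_distrib, neg_div]
    _ = -((p1 - p2).eval (q i - ℓ)) / P := by rw [hL]
    _ = 1 := by rw [hevalx, neg_neg, div_self hP]

lemma cauchy_key {n : ℕ} (ℓ : ℂ) (q : Fin n → ℂ)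
    (hinj : Function.Injective q) (i m : Fin n) :
    ∑ j, (∏ k ∈ Finset.univ.erase m, (q j + ℓ - q k))
        * ∏ k ∈ Finset.univ.erase j, ((q i - q k - ℓ)/(q j - q k))
      = ∏ k ∈ Finset.univ.erase m, (q i - q k) := by
  have hy : Function.Injective (fun j => q j + ℓ) := fun a b hab =>
    hinj (by simpa using hab)
  set N : Polynomial ℂ := ∏ k ∈ Finset.univ.erase m, (X - C (q k)) with hNdef
  have hdeg : N.degree < (n : WithBot ℕ) := by
    rw [hNdef, degree_prod]
    simp only [degree_X_sub_C]
    rw [Finset.sum_const, Finset.card_erase_of_mem (Finset.mem_univ m),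
      Finset.card_univ, Fintype.card_fin, nsmul_eq_mul, mul_one]
    exact_mod_cast Nat.sub_lt m.pos one_pos
  have hL := lagrange_eval_sum (fun j => q j + ℓ) hy N hdeg (q i)
  have e1 : ∀ j : Fin n, N.eval (q j + ℓ)
      = ∏ k ∈ Finset.univ.erase m, (q j + ℓ - q k) := by
    intro j; rw [hNdef, eval_prod]; simp
  have e2 : N.eval (q i) = ∏ k ∈ Finset.univ.erase m, (q i - q k) := by
    rw [hNdef, eval_prod]; simp
  rw [← e2, ← hL]
  refine Finset.sum_congr rfl fun j _ => ?_
  rw [e1]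
  congr 1
  refine Finset.prod_congr rfl fun k hk => ?_
  congr 1 <;> ring

lemma alg1 (d ℓ wi wm fj Ej Pm Pi Gj Gm : ℂ) (hd : d ≠ 0) (hℓ : ℓ ≠ 0)
    (hfj : fj ≠ 0) (hwm : wm ≠ 0) (hGj : Gj ≠ 0) (hGm : Gm ≠ 0) (hPi : Pi ≠ 0) :
    (-ℓ * wi/d * fj) * (Ej * Pm/((-ℓ) * fj * wm * Gj * Gm))
    = wi * Pm/(wm * Gm * Pi) * (Ej * ((Pi/d)/Gj)) := by
  have hA : d * ((-ℓ) * fj * wm * Gj * Gm) ≠ 0 := by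
    apply mul_ne_zero hd
    exact mul_ne_zero (mul_ne_zero (mul_ne_zero (mul_ne_zero (neg_ne_zero.mpr hℓ) hfj) hwm) hGj) hGm
  have hB : (wm * Gm * Pi) * (d * Gj) ≠ 0 :=
    mul_ne_zero (mul_ne_zero (mul_ne_zero hwm hGm) hPi) (mul_ne_zero hd hGj)
  rw [div_mul_eq_mul_div, div_mul_div_comm, div_div, ← mul_div_assoc,
    div_mul_div_comm, div_eq_div_iff hA hB]
  ring

/-- For ℓ ≠ 0, q with q_i − q_j ∉ {0, ℓ, −ℓ} for i ≠ j, and nonzero ω: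
(i) the row sums of Z̃ are the ω_i, i.e. Z̃·W = (ω₁,…,ω_n)ᵀ;
(ii) diag(q)·Z̃ = Z̃·(diag(q) + ℓ·Id − W·W̃);
(iii) Z̃ is invertible, so Z̃⁻¹·diag(q)·Z̃ = diag(q) + ℓ·Id − W·W̃. -/
theorem rationalRS_slice_identities
    (n : ℕ) (hn : 1 ≤ n) (ℓ : ℂ) (hℓ : ℓ ≠ 0)
    (q ω : Fin n → ℂ)
    (hq : ∀ i j : Fin n, i ≠ j →
      q i - q j ≠ 0 ∧ q i - q j ≠ ℓ ∧ q i - q j ≠ -ℓ)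
    (hω : ∀ i, ω i ≠ 0) :
    (∀ i, ∑ j, ZtilRS ℓ q ω i j = ω i) ∧
    (ZtilRS ℓ q ω * WcolRS n = Matrix.of fun i _ => ω i) ∧
    (Matrix.diagonal q * ZtilRS ℓ q ω
      = ZtilRS ℓ q ω *
        (Matrix.diagonal q + ℓ • (1 : Matrix (Fin n) (Fin n) ℂ)
          - WcolRS n * WtilRS ℓ q)) ∧
    IsUnit (ZtilRS ℓ q ω) ∧
    (ZtilRS ℓ q ω)⁻¹ * Matrix.diagonal q * ZtilRS ℓ q ω
      = Matrix.diagonal q + ℓ • (1 : Matrix (Fin n) (Fin n) ℂ)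
        - WcolRS n * WtilRS ℓ q := by
  classical
  have hinj : Function.Injective q := by
    intro a b hab; by_contra hne
    exact (hq a b hne).1 (by rw [hab, sub_self])
  have hd : ∀ a b : Fin n, q a - q b - ℓ ≠ 0 := by
    intro a b
    rcases eq_or_ne a b with rfl | hab
    · simpa using hℓ
    · exact sub_ne_zero.mpr (hq a b hab).2.1
  have hqne : ∀ a b : Fin n, a ≠ b → q a - q b ≠ 0 := fun a b h => (hq a b h).1
  have hfne : ∀ j : Fin n,
      (∏ r ∈ Finset.univ.erase j, (q r - q j - ℓ) / (q r - q j)) ≠ 0 := fun j =>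
    Finset.prod_ne_zero_iff.mpr fun k hk =>
      div_ne_zero (hd k j) (hqne k j (Finset.mem_erase.mp hk).1)
  have hGne : ∀ j : Fin n, (∏ k ∈ Finset.univ.erase j, (q j - q k)) ≠ 0 := fun j =>
    Finset.prod_ne_zero_iff.mpr fun k hk =>
      hqne j k (Ne.symm (Finset.mem_erase.mp hk).1)
  have hPne : ∀ i : Fin n, (∏ k, (q i - q k - ℓ)) ≠ 0 := fun i =>
    Finset.prod_ne_zero_iff.mpr fun k _ => hd i k
  -- part (i)
  have part1 : ∀ i, ∑ j, ZtilRS ℓ q ω i j = ω i := by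
    intro i
    have h := rowsum_key ℓ hℓ q hq i
    calc ∑ j, ZtilRS ℓ q ω i j
        = ∑ j, ω i * (-ℓ/(q i - q j - ℓ)
            * ∏ k ∈ Finset.univ.erase j, ((q k - q j - ℓ)/(q k - q j))) := by
          refine Finset.sum_congr rfl fun j _ => ?_
          show -ℓ * ω i / (q i - q j - ℓ) * _ = _
          ring
      _ = ω i := by rw [← Finset.mul_sum, h, mul_one]
  -- part (i'): Z * W
  have part2 : ZtilRS ℓ q ω * WcolRS n = Matrix.of fun i _ => ω i := by
    ext i t
    simp only [Matrix.mul_apply, WcolRS, Matrix.of_apply, mul_one]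
    exact part1 i
  -- part (ii)
  have part3 : Matrix.diagonal q * ZtilRS ℓ q ω
      = ZtilRS ℓ q ω *
        (Matrix.diagonal q + ℓ • (1 : Matrix (Fin n) (Fin n) ℂ)
          - WcolRS n * WtilRS ℓ q) := by
    rw [Matrix.mul_sub, Matrix.mul_add, Matrix.mul_smul, Matrix.mul_one,
      ← Matrix.mul_assoc, part2]
    ext i m
    rw [Matrix.sub_apply, Matrix.add_apply, Matrix.smul_apply,
      Matrix.diagonal_mul, Matrix.mul_diagonal, smul_eq_mul]
    have hW : ((Matrix.of fun i (_ : Fin 1) => ω i) * WtilRS ℓ q) i m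
        = ω i * (ℓ * ∏ r ∈ Finset.univ.erase m, (q r - q m - ℓ) / (q r - q m)) := by
      rw [Matrix.mul_apply]
      simp [WtilRS]
    rw [hW, show ZtilRS ℓ q ω i m = -ℓ * ω i / (q i - q m - ℓ)
        * ∏ r ∈ Finset.univ.erase m, (q r - q m - ℓ) / (q r - q m) from rfl]
    have hdim := hd i m
    generalize (∏ r ∈ Finset.univ.erase m, (q r - q m - ℓ) / (q r - q m)) = F
    field_simp
    ring
  -- the right inverse
  set Y : Matrix (Fin n) (Fin n) ℂ := Matrix.of fun j m =>
    (∏ k ∈ Finset.univ.erase m, (q j + ℓ - q k)) * (∏ k, (q m - q k - ℓ))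
      / ((-ℓ) * (∏ r ∈ Finset.univ.erase j, (q r - q j - ℓ) / (q r - q j)) * ω m
          * (∏ k ∈ Finset.univ.erase j, (q j - q k))
          * (∏ k ∈ Finset.univ.erase m, (q m - q k))) with hY
  have hZY : ZtilRS ℓ q ω * Y = 1 := by
    ext i m
    rw [Matrix.mul_apply]
    have hterm : ∀ j, ZtilRS ℓ q ω i j * Y j m
        = ω i * (∏ k, (q m - q k - ℓ))
            / (ω m * (∏ k ∈ Finset.univ.erase m, (q m - q k)) * (∏ k, (q i - q k - ℓ)))
          * ((∏ k ∈ Finset.univ.erase m, (q j + ℓ - q k))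
            * ∏ k ∈ Finset.univ.erase j, ((q i - q k - ℓ)/(q j - q k))) := by
      intro j
      have hPi : ∏ k ∈ Finset.univ.erase j, (q i - q k - ℓ)
          = (∏ k, (q i - q k - ℓ)) / (q i - q j - ℓ) := by
        rw [eq_div_iff (hd i j)]
        exact Finset.prod_erase_mul _ _ (Finset.mem_univ j)
      have hfne' : (∏ k ∈ Finset.univ.erase j, (q k - q j - ℓ))
          / (∏ k ∈ Finset.univ.erase j, (q k - q j)) ≠ 0 :=
        div_ne_zero (Finset.prod_ne_zero_iff.mpr fun k _ => hd k j)
          (Finset.prod_ne_zero_iff.mpr fun k hk => hqne k j (Finset.mem_erase.mp hk).1)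
      rw [hY]
      show (-ℓ * ω i / (q i - q j - ℓ) * _) * _ = _
      simp only [Finset.prod_div_distrib]
      rw [hPi]
      exact alg1 (q i - q j - ℓ) ℓ (ω i) (ω m) _ _ _ _ _ _
        (hd i j) hℓ hfne' (hω m) (hGne j) (hGne m) (hPne i)
    rw [Finset.sum_congr rfl fun j _ => hterm j, ← Finset.mul_sum,
      cauchy_key ℓ q hinj i m]
    rcases eq_or_ne i m with rfl | hne
    · rw [Matrix.one_apply_eq, mul_comm, ← mul_div_assoc,
        div_eq_one_iff_eq (mul_ne_zero (mul_ne_zero (hω i) (hGne i)) (hPne i))]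
      ring
    · rw [Matrix.one_apply_ne hne,
        Finset.prod_eq_zero (f := fun k => q i - q k)
          (Finset.mem_erase.mpr ⟨hne, Finset.mem_univ i⟩) (sub_self (q i)),
        mul_zero]
  have hdet : IsUnit (ZtilRS ℓ q ω).det := Matrix.isUnit_det_of_right_inverse hZY
  have part4 : IsUnit (ZtilRS ℓ q ω) := (Matrix.isUnit_iff_isUnit_det _).mpr hdet
  have part5 : (ZtilRS ℓ q ω)⁻¹ * Matrix.diagonal q * ZtilRS ℓ q ω
      = Matrix.diagonal q + ℓ • (1 : Matrix (Fin n) (Fin n) ℂ)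
        - WcolRS n * WtilRS ℓ q := by
    rw [Matrix.mul_assoc, part3, ← Matrix.mul_assoc, Matrix.nonsing_inv_mul _ hdet,
      Matrix.one_mul]
  exact ⟨part1, part2, part3, part4, part5⟩
end
end
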